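/- Let T : ℕ → ℝ≥0 satisfy: there exists c > 0 such that for all n ≥ n₀, T(n) ≤ c·n + T(n₁) + T(n₂) for some n₁, n₂ with n₁ + n₂ = n - 1 and max(n₁, n₂) ≤ (2/3)n + 2. Then T(n) = O(n log n), i.e., there exist constants C and N such that T(n) ≤ C·n·log n for all n ≥ N. -/
import Mathlib


set_option maxHeartbeats 1600000 in
/-- Divide-and-conquer recurrence: if `T : ℕ → ℝ≥0` satisfies, for some `c > 0` and
threshold `n₀`, that every `n ≥ n₀` splits as `T n ≤ c·n + T n₁ + T n₂` with
`n₁ + n₂ = n - 1` and `max n₁ n₂ ≤ (2/3)·n + 2`, then `T n = O(n log n)`: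
there are constants `C` and `N` with `T n ≤ C · n · log n` for all `n ≥ N`. -/
theorem recurrence_n_log_n (T : ℕ → NNReal) (c : ℝ) (hc : 0 < c) (n₀ : ℕ)
    (hrec : ∀ n : ℕ, n₀ ≤ n → ∃ n₁ n₂ : ℕ, n₁ + n₂ = n - 1 ∧
      (max n₁ n₂ : ℝ) ≤ (2 / 3 : ℝ) * n + 2 ∧
      (T n : ℝ) ≤ c * n + T n₁ + T n₂) :
    ∃ C : ℝ, ∃ N : ℕ, ∀ n : ℕ, N ≤ n → (T n : ℝ) ≤ C * n * Real.log n := by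
  set N := max n₀ 24 with hNdef
  set B := ∑ k ∈ Finset.range N, (T k : ℝ) with hBdef
  have hB0 : 0 ≤ B := Finset.sum_nonneg fun k _ => (T k).coe_nonneg
  have hBle : ∀ k, k < N → (T k : ℝ) ≤ B := fun k hk =>
    Finset.single_le_sum (fun i _ => (T i).coe_nonneg) (Finset.mem_range.mpr hk)
  set L := Real.log (4 / 3) with hLdef
  have hL0 : 0 < L := Real.log_pos (by norm_num)
  set C := (c + B + 1) * 2 / L with hCdef
  have hC0 : 0 < C := by positivity
  have hCL : C * L = (c + B + 1) * 2 := div_mul_cancel₀ _ (ne_of_gt hL0)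
  have key : ∀ n : ℕ, (T n : ℝ) ≤ B + C * n * Real.log n := by
    intro n
    induction n using Nat.strong_induction_on with
    | _ n ih =>
      have hlogn : 0 ≤ Real.log n := Real.log_natCast_nonneg n
      by_cases hn : n < N
      · have h1 := hBle n hn
        have h2 : 0 ≤ C * n * Real.log n := by positivity
        linarith
      · push_neg at hn
        have hn24 : (24 : ℕ) ≤ n := le_trans (le_max_right _ _) hn
        have hn0 : n₀ ≤ n := le_trans (le_max_left _ _) hn
        have hnR : (24 : ℝ) ≤ (n : ℝ) := by exact_mod_cast hn24
        obtain ⟨n₁, n₂, hsum, hmax, hT⟩ := hrec n hn0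
        have h34 : (2 / 3 : ℝ) * n + 2 ≤ (3 / 4 : ℝ) * n := by linarith
        have h1 : (n₁ : ℝ) ≤ (3 / 4 : ℝ) * n :=
          le_trans (le_trans (le_max_left (n₁:ℝ) (n₂:ℝ)) hmax) h34
        have h2 : (n₂ : ℝ) ≤ (3 / 4 : ℝ) * n :=
          le_trans (le_trans (le_max_right (n₁:ℝ) (n₂:ℝ)) hmax) h34
        have hlt1 : n₁ < n := by
          have : (n₁ : ℝ) < n := lt_of_le_of_lt h1 (by linarith)
          exact_mod_cast this
        have hlt2 : n₂ < n := by
          have : (n₂ : ℝ) < n := lt_of_le_of_lt h2 (by linarith)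
          exact_mod_cast this
        have hsumR : (n₁ : ℝ) + n₂ = (n : ℝ) - 1 := by
          have h1n : 1 ≤ n := by omega
          have := congrArg (Nat.cast : ℕ → ℝ) hsum
          push_cast [Nat.cast_sub h1n] at this
          linarith
        have hnpos : (0 : ℝ) < n := by linarith
        have hlog34 : Real.log ((3 / 4 : ℝ) * n) = Real.log n - L := by
          rw [Real.log_mul (by norm_num) (ne_of_gt hnpos), hLdef,
            show (3 / 4 : ℝ) = (4 / 3 : ℝ)⁻¹ by norm_num, Real.log_inv]
          ring
        have hlogpos : 0 ≤ Real.log n - L := by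
          rw [← hlog34]
          apply Real.log_nonneg; linarith
        have piece : ∀ m : ℕ, (m : ℝ) ≤ (3 / 4 : ℝ) * n →
            (m : ℝ) * Real.log m ≤ (m : ℝ) * (Real.log n - L) := by
          intro m hm
          rcases Nat.eq_zero_or_pos m with h | h
          · simp [h]
          · have hmpos : (0 : ℝ) < m := by exact_mod_cast h
            have : Real.log m ≤ Real.log ((3 / 4 : ℝ) * n) :=
              Real.log_le_log hmpos hm
            rw [hlog34] at this
            exact mul_le_mul_of_nonneg_left this (le_of_lt hmpos)
        have p1 := piece n₁ h1
        have p2 := piece n₂ h2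
        have ih1 := ih n₁ hlt1
        have ih2 := ih n₂ hlt2
        -- combine
        have hCLn : c * n + B ≤ C * ((n : ℝ) - 1) * L := by
          have : C * ((n : ℝ) - 1) * L = (c + B + 1) * 2 * ((n : ℝ) - 1) := by
            rw [mul_right_comm, hCL]
          rw [this]
          nlinarith [hB0, hc.le, hnR]
        have s1 : C * (n₁:ℝ) * Real.log n₁ ≤ C * ((n₁:ℝ) * (Real.log n - L)) := by
          rw [mul_assoc]; exact mul_le_mul_of_nonneg_left p1 hC0.le
        have s2 : C * (n₂:ℝ) * Real.log n₂ ≤ C * ((n₂:ℝ) * (Real.log n - L)) := by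
          rw [mul_assoc]; exact mul_le_mul_of_nonneg_left p2 hC0.le
        have s3 : C * ((n₁:ℝ) * (Real.log n - L)) + C * ((n₂:ℝ) * (Real.log n - L))
            = C * (((n:ℝ) - 1) * (Real.log n - L)) := by
          rw [← mul_add, ← add_mul, hsumR]
        have s4 : C * (((n:ℝ) - 1) * (Real.log n - L))
            = C * ((n:ℝ) - 1) * Real.log n - C * ((n:ℝ) - 1) * L := by ring
        have s5 : C * ((n:ℝ) - 1) * Real.log n ≤ C * (n:ℝ) * Real.log n := by
          have hCl : 0 ≤ C * Real.log n := mul_nonneg hC0.le hlogn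
          nlinarith
        linarith
  -- final absorption
  have h3 : (1 : ℝ) ≤ Real.log 3 := by
    rw [show (1:ℝ) = Real.log (Real.exp 1) by rw [Real.log_exp]]
    apply Real.log_le_log (Real.exp_pos 1)
    linarith [Real.exp_one_lt_d9]
  refine ⟨C + 1, max N (⌈B⌉₊ + 3), fun n hn => ?_⟩
  have hnN : N ≤ n := le_trans (le_max_left _ _) hn
  have hnB : ⌈B⌉₊ + 3 ≤ n := le_trans (le_max_right _ _) hn
  have hn3 : (3 : ℝ) ≤ n := by exact_mod_cast (by omega : 3 ≤ n)
  have hBn : B ≤ (n : ℝ) := le_trans (Nat.le_ceil B) (by exact_mod_cast (by omega : ⌈B⌉₊ ≤ n))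
  have hlog : (1 : ℝ) ≤ Real.log n := le_trans h3 (Real.log_le_log (by norm_num) hn3)
  have hBnl : B ≤ (n : ℝ) * Real.log n := by
    have h := mul_le_mul_of_nonneg_left hlog (by positivity : (0:ℝ) ≤ (n:ℝ))
    linarith
  have hk := key n
  have hring : (C + 1) * (n:ℝ) * Real.log n = C * (n:ℝ) * Real.log n + (n:ℝ) * Real.log n := by
    ring
  linarith
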